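/- Let n ≥ 2 and u ∈ ℂ. Let γ = (γ_1, γ_2) be a composition of n with γ_1, γ_2 > 0, and set w_γ = w_{γ_1} w_{γ_2} where w_{γ_1} = s_1 s_2 ⋯ s_{γ_1−1} and w_{γ_2} = s_{γ_1+1} ⋯ s_{n−1}. Let I_1 = {i_1,…,i_a} ⊆ {1,…,γ_1} and I_2 = {j_1,…,j_b} ⊆ {γ_1+1,…,n}, with a + b even. If a and b are both odd, then w_γ c_{I_1} c_{I_2} ∈ [ℌ_A, ℌ_A]. If a and b are both even, then there exists ε ∈ {1, −1} such that w_γ c_{I_1} c_{I_2} − ε w_γ ∈ [ℌ_A, ℌ_A]. -/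

import Mathlib

open scoped BigOperators

namespace DAHCA

/-- Generators of the degenerate affine Hecke-Clifford algebra of type `A_{n-1}`. -/
inductive Gen (n : ℕ) : Type
  | x : Fin n → Gen n
  | c : Fin n → Gen n
  | w : Equiv.Perm (Fin n) → Gen n

noncomputable def X (n : ℕ) (i : Fin n) : FreeAlgebra ℂ (Gen n) := FreeAlgebra.ι ℂ (Gen.x i)
noncomputable def C (n : ℕ) (i : Fin n) : FreeAlgebra ℂ (Gen n) := FreeAlgebra.ι ℂ (Gen.c i)
noncomputable def W (n : ℕ) (σ : Equiv.Perm (Fin n)) : FreeAlgebra ℂ (Gen n) :=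
  FreeAlgebra.ι ℂ (Gen.w σ)

/-- The simple transposition `s_{i+1} = (i, i+1)` (0-indexed). -/
def sA (n : ℕ) (i : ℕ) (h : i + 1 < n) : Equiv.Perm (Fin n) :=
  Equiv.swap ⟨i, Nat.lt_of_succ_lt h⟩ ⟨i + 1, h⟩

/-- The defining relations of the degenerate affine Hecke-Clifford algebra of type
`A_{n-1}` with parameter `u`. -/
inductive Rel (n : ℕ) (u : ℂ) : FreeAlgebra ℂ (Gen n) → FreeAlgebra ℂ (Gen n) → Prop
  | xx (i j : Fin n) : Rel n u (X n i * X n j) (X n j * X n i)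
  | csq (i : Fin n) : Rel n u (C n i * C n i) 1
  | cc (i j : Fin n) (hij : i ≠ j) : Rel n u (C n i * C n j) (-(C n j * C n i))
  | ww (σ τ : Equiv.Perm (Fin n)) : Rel n u (W n σ * W n τ) (W n (σ * τ))
  | wone : Rel n u (W n 1) 1
  | xc (i : Fin n) : Rel n u (X n i * C n i) (-(C n i * X n i))
  | xc' (i j : Fin n) (hij : i ≠ j) : Rel n u (X n i * C n j) (C n j * X n i)
  | wc (σ : Equiv.Perm (Fin n)) (i : Fin n) : Rel n u (W n σ * C n i) (C n (σ i) * W n σ)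
  | cross (i : ℕ) (h : i + 1 < n) :
      Rel n u (X n ⟨i + 1, h⟩ * W n (sA n i h) - W n (sA n i h) * X n ⟨i, Nat.lt_of_succ_lt h⟩)
        (u • (1 - C n ⟨i + 1, h⟩ * C n ⟨i, Nat.lt_of_succ_lt h⟩))
  | xw (i : ℕ) (h : i + 1 < n) (j : Fin n) (h1 : (j : ℕ) ≠ i) (h2 : (j : ℕ) ≠ i + 1) :
      Rel n u (X n j * W n (sA n i h)) (W n (sA n i h) * X n j)

/-- The degenerate affine Hecke-Clifford algebra of type `A_{n-1}` with parameter `u`. -/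
abbrev HA (n : ℕ) (u : ℂ) := RingQuot (Rel n u)

noncomputable def xH (n : ℕ) (u : ℂ) (i : Fin n) : HA n u :=
  RingQuot.mkAlgHom ℂ (Rel n u) (X n i)
noncomputable def cH (n : ℕ) (u : ℂ) (i : Fin n) : HA n u :=
  RingQuot.mkAlgHom ℂ (Rel n u) (C n i)
noncomputable def wH (n : ℕ) (u : ℂ) (σ : Equiv.Perm (Fin n)) : HA n u :=
  RingQuot.mkAlgHom ℂ (Rel n u) (W n σ)

/-- The linear span of all commutators in an algebra `A`; the cocenter is `A` modulo
this subspace. -/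
def commSpan (A : Type*) [Ring A] [Algebra ℂ A] : Submodule ℂ A :=
  Submodule.span ℂ {z : A | ∃ a b : A, z = a * b - b * a}

/-- The ordered product `c_{i_1} c_{i_2} ⋯ c_{i_m}` over `I = {i_1 < i_2 < ⋯ < i_m}`. -/
noncomputable def cProd (n : ℕ) (u : ℂ) (I : Finset (Fin n)) : HA n u :=
  ((I.sort (· ≤ ·)).map (cH n u)).prod

/-- The cycle `(a, a+1, …, b-1)` expressed as the product of the simple transpositions
`s_{a+1} s_{a+2} ⋯ s_{b-1}` (1-indexed), i.e. `(a,a+1)(a+1,a+2)⋯(b-2,b-1)` (0-indexed). -/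
def wSeg (n : ℕ) (a b : ℕ) : Equiv.Perm (Fin n) :=
  ((List.range (b - a - 1)).map fun j =>
    if h : a + j + 1 < n then sA n (a + j) h else 1).prod

end DAHCA
namespace DAHCA

section Dev
variable (n : ℕ) (u : ℂ)

lemma rel_eq {a b : FreeAlgebra ℂ (Gen n)} (h : Rel n u a b) :
    RingQuot.mkAlgHom ℂ (Rel n u) a = RingQuot.mkAlgHom ℂ (Rel n u) b :=
  RingQuot.mkAlgHom_rel ℂ h

lemma c_sq (i : Fin n) : cH n u i * cH n u i = 1 := by
  rw [cH, ← map_mul, rel_eq n u (Rel.csq i), map_one]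

lemma c_anti {i j : Fin n} (h : i ≠ j) :
    cH n u i * cH n u j = -(cH n u j * cH n u i) := by
  rw [cH, cH, ← map_mul, rel_eq n u (Rel.cc i j h), map_neg, map_mul]

lemma w_mul (σ τ : Equiv.Perm (Fin n)) : wH n u σ * wH n u τ = wH n u (σ * τ) := by
  rw [wH, wH, ← map_mul, rel_eq n u (Rel.ww σ τ)]; rfl

lemma w_c (σ : Equiv.Perm (Fin n)) (i : Fin n) :
    wH n u σ * cH n u i = cH n u (σ i) * wH n u σ := by
  rw [wH, cH, ← map_mul, rel_eq n u (Rel.wc σ i), map_mul]; rfl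

lemma c_w {σ : Equiv.Perm (Fin n)} {i j : Fin n} (h : σ j = i) :
    cH n u i * wH n u σ = wH n u σ * cH n u j := by
  rw [w_c, h]


lemma neg_mul' (a b : HA n u) : -a * b = -(a * b) := neg_mul a b
lemma mul_neg' (a b : HA n u) : a * -b = -(a * b) := mul_neg a b
lemma smul_neg' (r : ℂ) (a : HA n u) : r • -a = -(r • a) := smul_neg r a
lemma neg_smul' (r : ℂ) (a : HA n u) : -r • a = -(r • a) := neg_smul r a
lemma neg_neg' (a : HA n u) : - -a = a := neg_neg a

/-- `a ≈ b` modulo commutators. -/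
def Equ (a b : HA n u) : Prop := a - b ∈ commSpan (HA n u)

lemma equ_refl (a : HA n u) : Equ n u a a := by
  unfold Equ; rw [sub_self]; exact zero_mem _

lemma equ_of_eq {a b : HA n u} (h : a = b) : Equ n u a b := h ▸ equ_refl n u a

lemma equ_symm {a b : HA n u} (h : Equ n u a b) : Equ n u b a := by
  have := neg_mem h; rwa [neg_sub] at this

lemma equ_trans {a b c : HA n u} (h1 : Equ n u a b) (h2 : Equ n u b c) :
    Equ n u a c := by
  have := add_mem h1 h2; unfold Equ at *; rwa [sub_add_sub_cancel] at this

lemma equ_comm (a b : HA n u) : Equ n u (a * b) (b * a) :=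
  Submodule.subset_span ⟨a, b, rfl⟩

lemma equ_smul (r : ℂ) {a b : HA n u} (h : Equ n u a b) :
    Equ n u (r • a) (r • b) := by
  have := Submodule.smul_mem _ r h; unfold Equ at *; rwa [smul_sub] at this

lemma equ_trans_smul {a b c : HA n u} {e1 e2 : ℂ}
    (h1 : Equ n u a (e1 • b)) (h2 : Equ n u b (e2 • c)) :
    Equ n u a ((e1 * e2) • c) := by
  have := equ_smul n u e1 h2
  rw [smul_smul] at this
  exact equ_trans n u h1 this

lemma equ_conj_c (k : Fin n) (z : HA n u) :
    Equ n u z (cH n u k * z * cH n u k) := by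
  have h2 := equ_comm n u (z * cH n u k) (cH n u k)
  rw [mul_assoc, c_sq, mul_one, ← mul_assoc] at h2
  exact h2

def IsSign (e : ℂ) : Prop := e = 1 ∨ e = -1

lemma IsSign.one : IsSign 1 := Or.inl rfl

lemma IsSign.mul {e1 e2 : ℂ} (h1 : IsSign e1) (h2 : IsSign e2) : IsSign (e1 * e2) := by
  rcases h1 with h1 | h1 <;> rcases h2 with h2 | h2 <;> simp [h1, h2, IsSign]

lemma IsSign.sq {e : ℂ} (h : IsSign e) : e * e = 1 := by
  rcases h with h | h <;> simp [h]


noncomputable def cL (l : List (Fin n)) : HA n u := (l.map (cH n u)).prod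

lemma cL_nil : cL n u [] = 1 := rfl

lemma cL_cons (a : Fin n) (l : List (Fin n)) :
    cL n u (a :: l) = cH n u a * cL n u l := by
  simp [cL]

lemma cProd_eq (I : Finset (Fin n)) : cProd n u I = cL n u (I.sort (· ≤ ·)) := rfl

lemma cProd_empty : cProd n u (∅ : Finset (Fin n)) = 1 := by
  simp [cProd]

lemma cL_comm_single (l : List (Fin n)) (k : Fin n) :
    ∃ e : ℂ, IsSign e ∧ cL n u l * cH n u k = e • (cH n u k * cL n u l) := by
  induction l with
  | nil => exact ⟨1, IsSign.one, by simp [cL_nil]⟩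
  | cons a l ih =>
    obtain ⟨e, hs, he⟩ := ih
    by_cases hak : a = k
    · refine ⟨e, hs, ?_⟩
      rw [cL_cons, mul_assoc, he, mul_smul_comm, ← mul_assoc, hak,
        c_sq, ← mul_assoc, c_sq]
    · refine ⟨-e, Or.elim hs (fun h => Or.inr (by rw [h])) (fun h => Or.inl (by rw [h]; ring)), ?_⟩
      rw [cL_cons, mul_assoc, he, mul_smul_comm, ← mul_assoc, c_anti n u hak,
        neg_mul (cH n u k * cH n u a) (cL n u l),
        smul_neg e (cH n u k * cH n u a * cL n u l),
        neg_smul e (cH n u k * (cH n u a * cL n u l)), mul_assoc]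

lemma cL_anti_single (l : List (Fin n)) (k : Fin n) (h : ∀ x ∈ l, x ≠ k) :
    cL n u l * cH n u k = ((-1 : ℂ) ^ l.length) • (cH n u k * cL n u l) := by
  induction l with
  | nil => simp [cL_nil]
  | cons a l ih =>
    have ha : a ≠ k := h a (List.mem_cons_self)
    rw [cL_cons, mul_assoc, ih (fun x hx => h x (List.mem_cons_of_mem a hx)),
      mul_smul_comm, ← mul_assoc, c_anti n u ha]
    simp only [List.length_cons, pow_succ, mul_neg_one]
    rw [neg_mul (cH n u k * cH n u a) (cL n u l),
      smul_neg ((-1:ℂ) ^ l.length) (cH n u k * cH n u a * cL n u l),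
      neg_smul ((-1:ℂ) ^ l.length) (cH n u k * (cH n u a * cL n u l)), mul_assoc]

lemma cL_swap (l1 l2 : List (Fin n)) (h : ∀ i ∈ l1, ∀ j ∈ l2, i ≠ j) :
    cL n u l2 * cL n u l1 = ((-1 : ℂ) ^ (l1.length * l2.length)) • (cL n u l1 * cL n u l2) := by
  induction l1 with
  | nil => simp [cL_nil]
  | cons a l1 ih =>
    have ha : ∀ x ∈ l2, x ≠ a := fun x hx hxa =>
      h a (List.mem_cons_self) x hx hxa.symm
    rw [cL_cons, ← mul_assoc, cL_anti_single n u l2 a ha, smul_mul_assoc, mul_assoc,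
      ih (fun i hi j hj => h i (List.mem_cons_of_mem a hi) j hj), mul_smul_comm,
      smul_smul, ← mul_assoc, ← cL_cons]
    congr 1
    rw [← pow_add]
    congr 1
    simp [List.length_cons]
    ring

lemma cL_perm : ∀ {l l' : List (Fin n)}, l.Perm l' → l.Nodup →
    ∃ e : ℂ, IsSign e ∧ cL n u l = e • cL n u l' := by
  intro l l' hp
  induction hp with
  | nil => exact fun _ => ⟨1, IsSign.one, by simp⟩
  | cons x p ih =>
    intro hnd
    obtain ⟨e, hs, he⟩ := ih (List.Nodup.of_cons hnd)
    exact ⟨e, hs, by rw [cL_cons, he, cL_cons, mul_smul_comm]⟩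
  | swap x y l =>
    intro hnd
    have hxy : y ≠ x := by
      intro h; subst h; simp at hnd
    refine ⟨-1, Or.inr rfl, ?_⟩
    rw [cL_cons, cL_cons, ← mul_assoc, c_anti n u hxy, cL_cons, cL_cons, ← mul_assoc,
      neg_mul (cH n u x * cH n u y) (cL n u l),
      neg_smul (1:ℂ) (cH n u x * cH n u y * cL n u l), one_smul]
  | trans p1 p2 ih1 ih2 =>
    intro hnd
    obtain ⟨e1, hs1, he1⟩ := ih1 hnd
    obtain ⟨e2, hs2, he2⟩ := ih2 (p1.nodup_iff.mp hnd)
    exact ⟨e1 * e2, hs1.mul hs2, by rw [he1, he2, smul_smul]⟩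


lemma w_cL (σ : Equiv.Perm (Fin n)) : ∀ l : List (Fin n), (∀ i ∈ l, σ i = i) →
    wH n u σ * cL n u l = cL n u l * wH n u σ := by
  intro l
  induction l with
  | nil => simp [cL_nil]
  | cons a l ih =>
    intro h
    rw [cL_cons, ← mul_assoc, w_c, h a (List.mem_cons_self), mul_assoc,
      ih (fun i hi => h i (List.mem_cons_of_mem a hi))]
    exact (mul_assoc _ _ _).symm

/-- symmetric-difference-with-a-point operation -/
noncomputable def fl (k : Fin n) (I : Finset (Fin n)) : Finset (Fin n) :=
  if k ∈ I then I.erase k else insert k I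

lemma mem_fl {k i : Fin n} {I : Finset (Fin n)} (h : i ∈ fl n k I) : i = k ∨ i ∈ I := by
  unfold fl at h
  split at h
  · exact Or.inr (Finset.mem_of_mem_erase h)
  · exact (Finset.mem_insert.mp h).imp id id

lemma c_cProd (k : Fin n) (I : Finset (Fin n)) :
    ∃ e : ℂ, IsSign e ∧ cH n u k * cProd n u I = e • cProd n u (fl n k I) := by
  by_cases hk : k ∈ I
  · have hperm : (I.sort (· ≤ ·)).Perm (k :: (I.erase k).sort (· ≤ ·)) := by
      rw [← Multiset.coe_eq_coe, ← Multiset.cons_coe, Finset.sort_eq, Finset.sort_eq,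
        Finset.erase_val, Multiset.cons_erase (Finset.mem_def.mp hk)]
    obtain ⟨e, hs, he⟩ := cL_perm n u hperm (Finset.sort_nodup I _)
    refine ⟨e, hs, ?_⟩
    rw [fl, if_pos hk, cProd_eq, he, mul_smul_comm, cL_cons, ← mul_assoc, c_sq, one_mul,
      cProd_eq]
  · have hperm : (k :: I.sort (· ≤ ·)).Perm ((insert k I).sort (· ≤ ·)) := by
      rw [← Multiset.coe_eq_coe, ← Multiset.cons_coe, Finset.sort_eq, Finset.sort_eq,
        Finset.insert_val_of_notMem hk]
    have hnd : (k :: I.sort (· ≤ ·)).Nodup := by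
      refine List.nodup_cons.mpr ⟨?_, Finset.sort_nodup I _⟩
      rw [Finset.mem_sort]; exact hk
    obtain ⟨e, hs, he⟩ := cL_perm n u hperm hnd
    refine ⟨e, hs, ?_⟩
    rw [fl, if_neg hk, cProd_eq, cProd_eq, ← cL_cons, he]

lemma cProd_c (k : Fin n) (I : Finset (Fin n)) :
    ∃ e : ℂ, IsSign e ∧ cProd n u I * cH n u k = e • cProd n u (fl n k I) := by
  obtain ⟨e1, hs1, he1⟩ := cL_comm_single n u (I.sort (· ≤ ·)) k
  obtain ⟨e2, hs2, he2⟩ := c_cProd n u k I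
  refine ⟨e1 * e2, hs1.mul hs2, ?_⟩
  have he1' : cProd n u I * cH n u k = e1 • (cH n u k * cProd n u I) := he1
  rw [he1', he2, smul_smul]

lemma c_cProd_comm (k : Fin n) (I : Finset (Fin n)) :
    ∃ e : ℂ, IsSign e ∧ cH n u k * cProd n u I = e • (cProd n u I * cH n u k) := by
  obtain ⟨e1, hs1, he1⟩ := cL_comm_single n u (I.sort (· ≤ ·)) k
  refine ⟨e1, hs1, ?_⟩
  have he1' : cProd n u I * cH n u k = e1 • (cH n u k * cProd n u I) := he1
  rw [he1', smul_smul, hs1.sq, one_smul]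

lemma cProd_c_comm (k : Fin n) (I : Finset (Fin n)) :
    ∃ e : ℂ, IsSign e ∧ cProd n u I * cH n u k = e • (cH n u k * cProd n u I) := by
  obtain ⟨e1, hs1, he1⟩ := cL_comm_single n u (I.sort (· ≤ ·)) k
  exact ⟨e1, hs1, he1⟩

lemma move1 (w : Equiv.Perm (Fin n)) {k k' : Fin n} (hk : w k' = k)
    (J K : Finset (Fin n)) :
    ∃ e : ℂ, IsSign e ∧ Equ n u (wH n u w * cProd n u J * cProd n u K)
      (e • (wH n u w * cProd n u (fl n k' (fl n k J)) * cProd n u K)) := by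
  obtain ⟨e1, hs1, he1⟩ := cProd_c_comm n u k K
  obtain ⟨e2, hs2, he2⟩ := cProd_c n u k J
  obtain ⟨e3, hs3, he3⟩ := c_cProd n u k' (fl n k J)
  refine ⟨e1 * e2 * e3, (hs1.mul hs2).mul hs3, ?_⟩
  have hc := equ_conj_c n u k (wH n u w * cProd n u J * cProd n u K)
  have heq : cH n u k * (wH n u w * cProd n u J * cProd n u K) * cH n u k
      = (e1 * e2 * e3) • (wH n u w * cProd n u (fl n k' (fl n k J)) * cProd n u K) := by
    simp only [← mul_assoc]
    rw [c_w n u hk]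
    rw [mul_assoc (wH n u w * cH n u k' * cProd n u J) (cProd n u K) (cH n u k), he1,
      mul_smul_comm]
    rw [← mul_assoc (wH n u w * cH n u k' * cProd n u J) (cH n u k) (cProd n u K)]
    rw [mul_assoc (wH n u w * cH n u k') (cProd n u J) (cH n u k), he2, mul_smul_comm,
      smul_mul_assoc]
    rw [mul_assoc (wH n u w) (cH n u k') (cProd n u (fl n k J)), he3, mul_smul_comm,
      smul_mul_assoc]
    rw [smul_smul, smul_smul]
  rw [heq] at hc
  exact hc

lemma move2 (w : Equiv.Perm (Fin n)) {k k' : Fin n} (hk : w k' = k)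
    (J K : Finset (Fin n)) :
    ∃ e : ℂ, IsSign e ∧ Equ n u (wH n u w * cProd n u J * cProd n u K)
      (e • (wH n u w * cProd n u J * cProd n u (fl n k' (fl n k K)))) := by
  obtain ⟨e1, hs1, he1⟩ := cProd_c n u k K
  obtain ⟨e2, hs2, he2⟩ := c_cProd_comm n u k' J
  obtain ⟨e3, hs3, he3⟩ := c_cProd n u k' (fl n k K)
  refine ⟨e1 * e2 * e3, (hs1.mul hs2).mul hs3, ?_⟩
  have hc := equ_conj_c n u k (wH n u w * cProd n u J * cProd n u K)
  have heq : cH n u k * (wH n u w * cProd n u J * cProd n u K) * cH n u k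
      = (e1 * e2 * e3) • (wH n u w * cProd n u J * cProd n u (fl n k' (fl n k K))) := by
    simp only [← mul_assoc]
    rw [c_w n u hk]
    rw [mul_assoc (wH n u w * cH n u k' * cProd n u J) (cProd n u K) (cH n u k), he1,
      mul_smul_comm]
    rw [mul_assoc (wH n u w) (cH n u k') (cProd n u J), he2, mul_smul_comm,
      smul_mul_assoc]
    rw [← mul_assoc (wH n u w) (cProd n u J) (cH n u k')]
    rw [mul_assoc (wH n u w * cProd n u J) (cH n u k') (cProd n u (fl n k K)), he3,
      mul_smul_comm]
    rw [smul_smul, smul_smul]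
  rw [heq] at hc
  exact hc

lemma descent (L U : ℕ) (Φ : Finset (Fin n) → HA n u)
    (hmov : ∀ (k k' : Fin n), (k' : ℕ) + 1 = (k : ℕ) → L < (k : ℕ) → (k : ℕ) < U →
      ∀ J : Finset (Fin n), ∃ e : ℂ, IsSign e ∧
        Equ n u (Φ J) (e • Φ (fl n k' (fl n k J)))) :
    ∀ (N : ℕ) (J : Finset (Fin n)), (∑ i ∈ J, (i : ℕ)) ≤ N →
      (∀ i ∈ J, L ≤ (i : ℕ) ∧ (i : ℕ) < U) → Even J.card →
      ∃ e : ℂ, IsSign e ∧ Equ n u (Φ J) (e • Φ ∅) := by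
  intro N
  induction N using Nat.strong_induction_on with
  | _ N ih =>
    intro J hsum hbd heven
    rcases J.eq_empty_or_nonempty with rfl | hne
    · exact ⟨1, IsSign.one, by rw [one_smul]; exact equ_refl n u _⟩
    · have hkJ : J.max' hne ∈ J := J.max'_mem hne
      set k := J.max' hne with hkdef
      have hkU : (k : ℕ) < U := (hbd k hkJ).2
      have hkL : L < (k : ℕ) := by
        by_contra hle
        push_neg at hle
        have hsing : J = {k} := by
          refine Finset.eq_singleton_iff_unique_mem.mpr ⟨hkJ, fun x hx => Fin.ext ?_⟩
          have h1 : (x : ℕ) ≤ (k : ℕ) := Fin.le_def.mp (J.le_max' x hx)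
          have h2 : L ≤ (x : ℕ) := (hbd x hx).1
          omega
        rw [hsing, Finset.card_singleton] at heven
        exact (Nat.not_even_one) heven
      have hk'lt : (k : ℕ) - 1 < n := Nat.lt_of_le_of_lt (Nat.sub_le _ _) k.isLt
      obtain ⟨e1, hs1, he1⟩ := hmov k ⟨(k : ℕ) - 1, hk'lt⟩ (by simp; omega) hkL hkU J
      set k' : Fin n := ⟨(k : ℕ) - 1, hk'lt⟩ with hk'def
      have hflk : fl n k J = J.erase k := if_pos hkJ
      rw [hflk] at he1
      have hsum_e : (∑ i ∈ J.erase k, (i : ℕ)) + (k : ℕ) = ∑ i ∈ J, (i : ℕ) :=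
        Finset.sum_erase_add J _ hkJ
      have hcard_e : (J.erase k).card + 1 = J.card := by
        rw [Finset.card_erase_of_mem hkJ]
        have : 0 < J.card := Finset.card_pos.mpr hne
        omega
      by_cases hk'mem : k' ∈ J.erase k
      · have hfl2 : fl n k' (J.erase k) = (J.erase k).erase k' := if_pos hk'mem
        rw [hfl2] at he1
        have hsum2 : (∑ i ∈ (J.erase k).erase k', (i : ℕ)) + (k' : ℕ) =
            ∑ i ∈ J.erase k, (i : ℕ) := Finset.sum_erase_add _ _ hk'mem
        have hcard2 : ((J.erase k).erase k').card + 1 = (J.erase k).card := by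
          rw [Finset.card_erase_of_mem hk'mem]
          have : 0 < (J.erase k).card := Finset.card_pos.mpr ⟨k', hk'mem⟩
          omega
        have heven2 : Even ((J.erase k).erase k').card := by
          rw [Nat.even_iff] at heven ⊢; omega
        obtain ⟨e2, hs2, he2⟩ := ih (∑ i ∈ (J.erase k).erase k', (i : ℕ)) (by omega)
          ((J.erase k).erase k') le_rfl
          (fun i hi => hbd i (Finset.mem_of_mem_erase (Finset.mem_of_mem_erase hi)))
          heven2
        exact ⟨e1 * e2, hs1.mul hs2, equ_trans_smul n u he1 he2⟩
      · have hfl2 : fl n k' (J.erase k) = insert k' (J.erase k) := if_neg hk'mem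
        rw [hfl2] at he1
        have hsum2 : (∑ i ∈ insert k' (J.erase k), (i : ℕ)) =
            (k' : ℕ) + ∑ i ∈ J.erase k, (i : ℕ) := Finset.sum_insert hk'mem
        have hcard2 : (insert k' (J.erase k)).card = (J.erase k).card + 1 :=
          Finset.card_insert_of_notMem hk'mem
        have heven2 : Even ((insert k' (J.erase k)).card) := by
          rw [Nat.even_iff] at heven ⊢; omega
        have hk'val : (k' : ℕ) = (k : ℕ) - 1 := rfl
        obtain ⟨e2, hs2, he2⟩ := ih (∑ i ∈ insert k' (J.erase k), (i : ℕ)) (by omega)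
          (insert k' (J.erase k)) le_rfl
          (fun i hi => by
            rcases Finset.mem_insert.mp hi with rfl | hi'
            · exact ⟨by omega, by omega⟩
            · exact hbd i (Finset.mem_of_mem_erase hi'))
          heven2
        exact ⟨e1 * e2, hs1.mul hs2, equ_trans_smul n u he1 he2⟩

def wAux (a m : ℕ) : Equiv.Perm (Fin n) :=
  ((List.range m).map fun j => if h : a + j + 1 < n then sA n (a + j) h else 1).prod

lemma wSeg_eq (a b : ℕ) : wSeg n a b = wAux n a (b - a - 1) := rfl

lemma wAux_zero (a : ℕ) : wAux n a 0 = 1 := rfl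

lemma wAux_succ (a m : ℕ) :
    wAux n a (m + 1) = wAux n a m * (if h : a + m + 1 < n then sA n (a + m) h else 1) := by
  unfold wAux
  rw [List.range_succ, List.map_append, List.prod_append]
  simp

lemma wAux_fix (a m : ℕ) : ∀ x : Fin n, ((x : ℕ) < a ∨ a + m < (x : ℕ)) →
    wAux n a m x = x := by
  induction m with
  | zero => intro x _; rw [wAux_zero]; rfl
  | succ m ih =>
    intro x hx
    rw [wAux_succ, Equiv.Perm.mul_apply]
    have hfix : (if h : a + m + 1 < n then sA n (a + m) h else 1) x = x := by
      split
      · apply Equiv.swap_apply_of_ne_of_ne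
        · exact fun hc => by rw [hc] at hx; simp at hx
        · exact fun hc => by rw [hc] at hx; simp at hx; omega
      · rfl
    rw [hfix]
    exact ih x (by omega)

lemma wAux_val (a : ℕ) : ∀ (m j : ℕ) (hj1 : j + 1 < n), a ≤ j → j < a + m → a + m < n →
    wAux n a m ⟨j, Nat.lt_of_succ_lt hj1⟩ = ⟨j + 1, hj1⟩ := by
  intro m
  induction m with
  | zero => intro j _ h1 h2 _; omega
  | succ m ih =>
    intro j hj1 h1 h2 h3
    rw [wAux_succ, Equiv.Perm.mul_apply]
    have hn' : a + m + 1 < n := h3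
    rw [dif_pos hn']
    by_cases hc : j = a + m
    · have : sA n (a + m) hn' ⟨j, Nat.lt_of_succ_lt hj1⟩ = ⟨a + m + 1, hn'⟩ := by
        unfold sA
        have : (⟨j, Nat.lt_of_succ_lt hj1⟩ : Fin n) = ⟨a + m, Nat.lt_of_succ_lt hn'⟩ :=
          Fin.ext hc
        rw [this, Equiv.swap_apply_left]
      rw [this, wAux_fix n a m ⟨a + m + 1, hn'⟩ (by simp)]
      exact Fin.ext (by simp; omega)
    · have hfix : sA n (a + m) hn' ⟨j, Nat.lt_of_succ_lt hj1⟩ = ⟨j, Nat.lt_of_succ_lt hj1⟩ := by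
        unfold sA
        apply Equiv.swap_apply_of_ne_of_ne
        · exact fun hcc => by
            have := congrArg Fin.val hcc; simp at this; omega
        · exact fun hcc => by
            have := congrArg Fin.val hcc; simp at this; omega
      rw [hfix]
      exact ih j hj1 h1 (by omega) (by omega)

lemma wAux_mem (a : ℕ) : ∀ (m : ℕ), a + m < n → ∀ x : Fin n, a ≤ (x : ℕ) → (x : ℕ) ≤ a + m →
    a ≤ ((wAux n a m x : Fin n) : ℕ) ∧ ((wAux n a m x : Fin n) : ℕ) ≤ a + m := by
  intro m
  induction m with
  | zero => intro _ x h1 h2; rw [wAux_zero]; exact ⟨h1, h2⟩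
  | succ m ih =>
    intro h3 x h1 h2
    rw [wAux_succ, Equiv.Perm.mul_apply]
    have hn' : a + m + 1 < n := h3
    rw [dif_pos hn']
    set y := sA n (a + m) hn' x with hy
    have hybd : a ≤ (y : ℕ) ∧ (y : ℕ) ≤ a + m + 1 := by
      unfold sA at hy
      by_cases hx1 : x = ⟨a + m, Nat.lt_of_succ_lt hn'⟩
      · rw [hy, hx1, Equiv.swap_apply_left]; constructor <;> simp <;> omega
      · by_cases hx2 : x = ⟨a + m + 1, hn'⟩
        · rw [hy, hx2, Equiv.swap_apply_right]; constructor <;> simp <;> omega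
        · rw [hy, Equiv.swap_apply_of_ne_of_ne hx1 hx2]; exact ⟨h1, h2⟩
    by_cases hyval : (y : ℕ) ≤ a + m
    · have := ih (by omega) y hybd.1 hyval
      exact ⟨this.1, by omega⟩
    · have hyv : (y : ℕ) = a + m + 1 := by omega
      rw [wAux_fix n a m y (by omega)]
      omega
end Dev
end DAHCA
namespace DAHCA

/-- Let `γ = (γ_1, γ_2)` be a composition of `n` and
`w_γ = w_{γ_1} w_{γ_2}`.  If `I_1 ⊆ B_1` and `I_2 ⊆ B_2` with `|I_1| + |I_2|` even, then
`w_γ c_{I_1} c_{I_2}` is a commutator-combination if `|I_1|, |I_2|` are odd, and is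
congruent to `± w_γ` modulo commutators if `|I_1|, |I_2|` are even. -/
theorem wGamma_two_blocks_reduction (n : ℕ) (hn : 2 ≤ n) (u : ℂ)
    (γ1 γ2 : ℕ) (h1 : 0 < γ1) (h2 : 0 < γ2) (hsum : γ1 + γ2 = n)
    (I1 I2 : Finset (Fin n))
    (hI1 : ∀ i ∈ I1, (i : ℕ) < γ1) (hI2 : ∀ i ∈ I2, γ1 ≤ (i : ℕ))
    (hab : Even (I1.card + I2.card)) :
    (Odd I1.card → Odd I2.card →
      wH n u (wSeg n 0 γ1 * wSeg n γ1 n) * cProd n u I1 * cProd n u I2 ∈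
        commSpan (HA n u)) ∧
    (Even I1.card → Even I2.card →
      ∃ ε : ℂ, (ε = 1 ∨ ε = -1) ∧
        wH n u (wSeg n 0 γ1 * wSeg n γ1 n) * cProd n u I1 * cProd n u I2 -
          ε • wH n u (wSeg n 0 γ1 * wSeg n γ1 n) ∈ commSpan (HA n u)) := by
  have hγ1n : γ1 < n := by omega
  have hγ1n' : γ1 ≤ n := by omega
  set w1 := wSeg n 0 γ1 with hw1def
  set w2 := wSeg n γ1 n with hw2def
  have hw1 : w1 = wAux n 0 (γ1 - 1) := by rw [hw1def, wSeg_eq, Nat.sub_zero]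
  have hw2 : w2 = wAux n γ1 (n - γ1 - 1) := by rw [hw2def, wSeg_eq]
  have hm1 : 0 + (γ1 - 1) = γ1 - 1 := by omega
  have hm2 : γ1 + (n - γ1 - 1) = n - 1 := by omega
  -- fixed point and value facts
  have F1 : ∀ x : Fin n, γ1 ≤ (x : ℕ) → w1 x = x := fun x hx => by
    rw [hw1]; exact wAux_fix n 0 (γ1 - 1) x (Or.inr (by omega))
  have F2 : ∀ x : Fin n, (x : ℕ) < γ1 → w2 x = x := fun x hx => by
    rw [hw2]; exact wAux_fix n γ1 (n - γ1 - 1) x (Or.inl hx)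
  have F3 : ∀ x : Fin n, (x : ℕ) < γ1 → ((w1 x : Fin n) : ℕ) < γ1 := fun x hx => by
    rw [hw1]
    have := wAux_mem n 0 (γ1 - 1) (by omega) x (by omega) (by omega)
    omega
  have F4 : ∀ x : Fin n, γ1 ≤ (x : ℕ) → γ1 ≤ ((w2 x : Fin n) : ℕ) := fun x hx => by
    rw [hw2]
    have := wAux_mem n γ1 (n - γ1 - 1) (by omega) x (by omega) (by omega)
    omega
  have F5 : ∀ (j : ℕ) (hj : j + 1 < γ1) (hjn : j + 1 < n),
      w1 ⟨j, Nat.lt_of_succ_lt hjn⟩ = ⟨j + 1, hjn⟩ := fun j hj hjn => by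
    rw [hw1]; exact wAux_val n 0 (γ1 - 1) j hjn (by omega) (by omega) (by omega)
  have F6 : ∀ (j : ℕ) (hj : γ1 ≤ j) (hjn : j + 1 < n),
      w2 ⟨j, Nat.lt_of_succ_lt hjn⟩ = ⟨j + 1, hjn⟩ := fun j hj hjn => by
    rw [hw2]; exact wAux_val n γ1 (n - γ1 - 1) j hjn (by omega) (by omega) (by omega)
  have hcomm : w2 * w1 = w1 * w2 := by
    apply Equiv.ext
    intro x
    simp only [Equiv.Perm.mul_apply]
    by_cases hx : (x : ℕ) < γ1
    · rw [F2 x hx, F2 (w1 x) (F3 x hx)]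
    · rw [F1 x (by omega), F1 (w2 x) (F4 x (by omega))]
  have slide1 : ∀ k k' : Fin n, (k' : ℕ) + 1 = (k : ℕ) → 0 < (k : ℕ) → (k : ℕ) < γ1 →
      (w1 * w2) k' = k := by
    intro k k' hkk _ hkγ
    have hk' : (k' : ℕ) < γ1 := by omega
    have hjn : (k' : ℕ) + 1 < n := by omega
    have hfin : k' = (⟨(k' : ℕ), Nat.lt_of_succ_lt hjn⟩ : Fin n) := Fin.ext rfl
    rw [Equiv.Perm.mul_apply, F2 k' hk', hfin, F5 (k' : ℕ) (by omega) hjn]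
    exact Fin.ext (by simp [hkk])
  have slide2 : ∀ k k' : Fin n, (k' : ℕ) + 1 = (k : ℕ) → γ1 < (k : ℕ) → (k : ℕ) < n →
      (w1 * w2) k' = k := by
    intro k k' hkk hkγ _
    have hjn : (k' : ℕ) + 1 < n := by omega
    have hfin : k' = (⟨(k' : ℕ), Nat.lt_of_succ_lt hjn⟩ : Fin n) := Fin.ext rfl
    rw [Equiv.Perm.mul_apply, hfin, F6 (k' : ℕ) (by omega) hjn]
    have : (⟨(k' : ℕ) + 1, hjn⟩ : Fin n) = k := Fin.ext (by simp [hkk])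
    rw [this, F1 k (by omega)]
  constructor
  · -- odd case
    intro ho1 ho2
    have hdisj : ∀ i ∈ I1.sort (· ≤ ·), ∀ j ∈ I2.sort (· ≤ ·), i ≠ j := by
      intro i hi j hj hij
      have h1' := hI1 i (Finset.mem_sort (α := Fin n) (· ≤ ·) |>.mp hi)
      have h2' := hI2 j (Finset.mem_sort (α := Fin n) (· ≤ ·) |>.mp hj)
      rw [hij] at h1'
      omega
    have hw2I1 : wH n u w2 * cProd n u I1 = cProd n u I1 * wH n u w2 :=
      w_cL n u w2 (I1.sort (· ≤ ·)) (fun i hi =>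
        F2 i (hI1 i (Finset.mem_sort (α := Fin n) (· ≤ ·) |>.mp hi)))
    have hw1I2 : wH n u w1 * cProd n u I2 = cProd n u I2 * wH n u w1 :=
      w_cL n u w1 (I2.sort (· ≤ ·)) (fun i hi =>
        F1 i (hI2 i (Finset.mem_sort (α := Fin n) (· ≤ ·) |>.mp hi)))
    have hanti : cProd n u I2 * cProd n u I1 =
        ((-1 : ℂ) ^ (I1.card * I2.card)) • (cProd n u I1 * cProd n u I2) := by
      have h := cL_swap n u (I1.sort (· ≤ ·)) (I2.sort (· ≤ ·)) hdisj
      simp only [Finset.length_sort] at h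
      exact h
    set z := wH n u (w1 * w2) * cProd n u I1 * cProd n u I2 with hz
    have hAB : (wH n u w1 * cProd n u I1) * (wH n u w2 * cProd n u I2) = z := by
      rw [hz]
      simp only [← mul_assoc]
      rw [mul_assoc (wH n u w1) (cProd n u I1) (wH n u w2), ← hw2I1, ← mul_assoc, w_mul]
    have hBA : (wH n u w2 * cProd n u I2) * (wH n u w1 * cProd n u I1) =
        ((-1 : ℂ) ^ (I1.card * I2.card)) • z := by
      rw [hz]
      simp only [← mul_assoc]
      rw [mul_assoc (wH n u w2) (cProd n u I2) (wH n u w1), ← hw1I2, ← mul_assoc, w_mul,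
        hcomm, mul_assoc (wH n u (w1 * w2)) (cProd n u I2) (cProd n u I1), hanti,
        mul_smul_comm, ← mul_assoc]
    have hE := equ_comm n u (wH n u w1 * cProd n u I1) (wH n u w2 * cProd n u I2)
    rw [hAB, hBA, Odd.neg_one_pow (ho1.mul ho2)] at hE
    have hneg : (-1 : ℂ) • z = -z := neg_one_smul ℂ z
    rw [hneg] at hE
    have hE' : z + z ∈ commSpan (HA n u) := by
      have hh : z - -z ∈ commSpan (HA n u) := hE
      rwa [sub_neg_eq_add] at hh
    have h2' : (2⁻¹ : ℂ) • (z + z) ∈ commSpan (HA n u) :=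
      Submodule.smul_mem _ _ hE'
    have heq : (2⁻¹ : ℂ) • (z + z) = z := by
      rw [← two_smul ℂ z, smul_smul]
      norm_num
    rwa [heq] at h2'
  · -- even case
    intro he1 he2
    obtain ⟨e1, hs1, hd1⟩ := descent n u 0 γ1
      (fun J => wH n u (w1 * w2) * cProd n u J * cProd n u I2)
      (fun k k' hkk hL hU J => move1 n u (w1 * w2) (slide1 k k' hkk hL hU) J I2)
      (∑ i ∈ I1, (i : ℕ)) I1 le_rfl (fun i hi => ⟨Nat.zero_le _, hI1 i hi⟩) he1
    obtain ⟨e2, hs2, hd2⟩ := descent n u γ1 n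
      (fun K => wH n u (w1 * w2) * cProd n u (∅ : Finset (Fin n)) * cProd n u K)
      (fun k k' hkk hL hU K => move2 n u (w1 * w2) (slide2 k k' hkk hL hU) ∅ K)
      (∑ i ∈ I2, (i : ℕ)) I2 le_rfl (fun i hi => ⟨hI2 i hi, i.isLt⟩) he2
    refine ⟨e1 * e2, (hs1.mul hs2 : IsSign (e1 * e2)), ?_⟩
    have hfin := equ_trans_smul n u hd1 hd2
    have hone : wH n u (w1 * w2) * cProd n u (∅ : Finset (Fin n)) *
        cProd n u (∅ : Finset (Fin n)) = wH n u (w1 * w2) := by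
      rw [cProd_empty, mul_one, mul_one]
    rw [hone] at hfin
    exact hfin


end DAHCA
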